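/- With Ψ_t and Θ as above, the (1,2) entry of Ψ_t Σ̄_0 Ψ_tᵀ + (1−ρ²) Ψ_t (∫_0^t Ψ_u^{−1}ΘΘᵀ(Ψ_u^{−1})ᵀ du) Ψ_tᵀ equals e^{−βt} Σ̄_0^{QV} + (e^{−βT}/(2k)) t e^{−βt} Σ̄_0^V + (1−ρ²)(η² e^{−βT}/(4β²k))(sinh(βt) − βt e^{−βt}). -/

import Mathlib

open Real intervalIntegral in
lemma int_exp_mul (b t : ℝ) (hb : b ≠ 0) :
    ∫ u in (0:ℝ)..t, Real.exp (b*u) = (Real.exp (b*t) - 1)/b := by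
  have : ∀ u ∈ Set.uIcc (0:ℝ) t, HasDerivAt (fun u => Real.exp (b*u)/b) (Real.exp (b*u)) u := by
    intro u _
    have h := ((hasDerivAt_id u).const_mul b).exp
    simpa [mul_div_assoc, mul_comm, mul_div_cancel_left₀ _ hb] using h.div_const b
  rw [integral_eq_sub_of_hasDerivAt this]
  · simp [Real.exp_zero]; try ring
  · exact (Real.continuous_exp.comp (continuous_const.mul continuous_id)).intervalIntegrable 0 t

open Real intervalIntegral in
lemma int_mul_exp (b t : ℝ) (hb : b ≠ 0) :
    ∫ u in (0:ℝ)..t, u * Real.exp (b*u)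
      = (t/b - 1/b^2) * Real.exp (b*t) + 1/b^2 := by
  have : ∀ u ∈ Set.uIcc (0:ℝ) t, HasDerivAt (fun u => (u/b - 1/b^2) * Real.exp (b*u)) (u * Real.exp (b*u)) u := by
    intro u _
    have h1 : HasDerivAt (fun u : ℝ => u/b - 1/b^2) (1/b) u := by
      exact ((hasDerivAt_id u).div_const b).sub_const (1/b^2)
    have h2 : HasDerivAt (fun u : ℝ => Real.exp (b*u)) (b * Real.exp (b*u)) u := by
      simpa [mul_comm] using ((hasDerivAt_id u).const_mul b).exp
    have := h1.mul h2
    refine this.congr_deriv ?_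
    have hbb : b * b⁻¹ = 1 := mul_inv_cancel₀ hb
    linear_combination (u * Real.exp (b*u) - Real.exp (b*u) * b⁻¹) * hbb
  rw [integral_eq_sub_of_hasDerivAt this]
  · simp [Real.exp_zero]; try ring
  · exact (continuous_id.mul (Real.continuous_exp.comp (continuous_const.mul continuous_id))).intervalIntegrable 0 t

open Real Matrix

theorem inventory_signal_covariance (k β η ρ T : ℝ) (hk : 0 < k) (hβ : β ≠ 0)
    (hρ : ρ ∈ Set.Icc (-1 : ℝ) 1) (hT : 0 < T)
    (SigQ SigQV SigV : ℝ) :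
    let Sig0 : Matrix (Fin 2) (Fin 2) ℝ := !![SigQ, SigQV; SigQV, SigV]
    let Ψ : ℝ → Matrix (Fin 2) (Fin 2) ℝ := fun t =>
      !![1, (exp (-β * T) / (2 * k)) * t; 0, exp (-β * t)]
    let Ψinv : ℝ → Matrix (Fin 2) (Fin 2) ℝ := fun t =>
      !![1, -(exp (-β * (T - t)) / (2 * k)) * t; 0, exp (β * t)]
    let Θ : Matrix (Fin 2) (Fin 1) ℝ := !![0; η]
    ∀ t ∈ Set.Icc (0 : ℝ) T,
      (Ψ t * Sig0 * (Ψ t)ᵀ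
          + (1 - ρ ^ 2) •
            (Ψ t *
              (Matrix.of fun i j =>
                ∫ u in (0 : ℝ)..t, (Ψinv u * (Θ * Θᵀ) * (Ψinv u)ᵀ) i j) *
              (Ψ t)ᵀ)) 0 1
        = exp (-β * t) * SigQV
            + (exp (-β * T) / (2 * k)) * t * exp (-β * t) * SigV
            + (1 - ρ ^ 2) * (η ^ 2 * exp (-β * T) / (4 * β ^ 2 * k)) *
                (Real.sinh (β * t) - β * t * exp (-β * t)) := by
  intro Sig0 Ψ Ψinv Θ t ht
  simp only [Sig0, Ψ, Ψinv, Θ, Matrix.add_apply, Matrix.smul_apply, Matrix.mul_apply,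
    Matrix.transpose_apply, Fin.sum_univ_two, Fin.sum_univ_one, Matrix.of_apply,
    Matrix.cons_val', Matrix.cons_val_zero, Matrix.cons_val_one, Matrix.head_cons,
    Matrix.head_fin_const, Matrix.empty_val', Matrix.cons_val_fin_one, smul_eq_mul,
    mul_zero, zero_mul, zero_add, add_zero, one_mul, mul_one]
  have hb2 : (2*β) ≠ 0 := mul_ne_zero two_ne_zero hβ
  have key : ∀ u : ℝ, Real.exp (-β*(T-u)) * Real.exp (β*u) = Real.exp (-β*T) * Real.exp (2*β*u) := by
    intro u; rw [← Real.exp_add, ← Real.exp_add]; ring_nf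
  have I1 : (∫ u in (0:ℝ)..t, -(Real.exp (-β*(T-u))/(2*k)) * u * (η*η) * Real.exp (β*u))
      = (-(η^2 * Real.exp (-β*T)/(2*k))) * ((t/(2*β) - 1/(2*β)^2) * Real.exp ((2*β)*t) + 1/(2*β)^2) := by
    rw [← int_mul_exp (2*β) t hb2, ← intervalIntegral.integral_const_mul]
    apply intervalIntegral.integral_congr
    intro u _
    dsimp only
    have h : -(Real.exp (-β*(T-u))/(2*k)) * u * (η*η) * Real.exp (β*u)
        = -(η^2/(2*k)) * u * (Real.exp (-β*(T-u)) * Real.exp (β*u)) := by ring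
    rw [h, key u]; ring
  have I2 : (∫ u in (0:ℝ)..t, Real.exp (β*u) * (η*η) * Real.exp (β*u))
      = η^2 * ((Real.exp ((2*β)*t) - 1)/(2*β)) := by
    rw [← int_exp_mul (2*β) t hb2, ← intervalIntegral.integral_const_mul]
    apply intervalIntegral.integral_congr
    intro u _
    dsimp only
    rw [show Real.exp (β*u) * (η*η) * Real.exp (β*u) = (η*η) * (Real.exp (β*u) * Real.exp (β*u)) from by ring,
      ← Real.exp_add]
    ring_nf
  rw [I1, I2, Real.sinh_eq]
  have h1 : Real.exp (-β*t) = (Real.exp (β*t))⁻¹ := by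
    rw [show -β*t = -(β*t) by ring, Real.exp_neg]
  have h2 : Real.exp (-β*T) = (Real.exp (β*T))⁻¹ := by
    rw [show -β*T = -(β*T) by ring, Real.exp_neg]
  have h3 : Real.exp (2*β*t) = Real.exp (β*t) * Real.exp (β*t) := by
    rw [← Real.exp_add]; ring_nf
  rw [Real.exp_neg (β*t), h1, h2, h3]
  field_simp
  ring
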